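/- Let N ≥ 1 be a natural number and let S be a finite subset of {0,1}^N with |S| ≥ (4/5)·2^N. Let p be a real multivariate polynomial in N variables that is multilinear (has degree at most 1 in each variable), satisfies p(x) ∈ [0,1] for every x ∈ {0,1}^N, and satisfies |p(x) − PARITY(x)| ≤ 1/3 for every x ∈ S, where PARITY(x) ∈ {0,1} is the Hamming weight of x modulo 2. Then the total degree of p equals N. -/
import Mathlib


/-- Hamming weight of a point of the Boolean cube. -/
def hw {N : ℕ} (x : Fin N → Bool) : ℕ :=
  (Finset.univ.filter fun i => x i = true).card

/-- PARITY of a point of the Boolean cube, as a real number in {0,1}: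
the Hamming weight modulo 2. -/
def parityVal {N : ℕ} (x : Fin N → Bool) : ℝ := ((hw x % 2 : ℕ) : ℝ)

/-- The 0/1 point of ℝ^N corresponding to a point of the Boolean cube. -/
def toReal01 {N : ℕ} (x : Fin N → Bool) : Fin N → ℝ := fun i => if x i then 1 else 0

lemma neg_one_pow_hw_update {N : ℕ} (x : Fin N → Bool) (i : Fin N) :
    ((-1 : ℝ)) ^ hw (Function.update x i (!x i)) = -(-1 : ℝ) ^ hw x := by
  rcases Bool.eq_false_or_eq_true (x i) with hx | hx
  case inr =>
    have hset : (Finset.univ.filter fun j => Function.update x i (!x i) j = true)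
        = insert i (Finset.univ.filter fun j => x j = true) := by
      ext j
      rcases eq_or_ne j i with rfl | hj
      · simp [hx]
      · simp [Function.update_of_ne hj, hj]
    have hcard : hw (Function.update x i (!x i)) = hw x + 1 := by
      unfold hw
      rw [hset, Finset.card_insert_of_notMem (by simp [hx])]
    rw [hcard, pow_succ]; ring
  case inl =>
    have hset : (Finset.univ.filter fun j => x j = true)
        = insert i (Finset.univ.filter fun j => Function.update x i (!x i) j = true) := by
      ext j
      rcases eq_or_ne j i with rfl | hj
      · simp [hx]
      · simp [Function.update_of_ne hj, hj]
    have hcard : hw x = hw (Function.update x i (!x i)) + 1 := by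
      unfold hw
      rw [hset, Finset.card_insert_of_notMem (by simp [hx])]
    rw [hcard, pow_succ]; ring

/-- A signed sum over the cube of a function invariant under flipping one
coordinate vanishes. -/
lemma signed_sum_zero {N : ℕ} (c : (Fin N → Bool) → ℝ) (i0 : Fin N)
    (hc : ∀ x, c (Function.update x i0 (!x i0)) = c x) :
    ∑ x : Fin N → Bool, (-1 : ℝ) ^ hw x * c x = 0 := by
  apply Finset.sum_ninvolution (fun x => Function.update x i0 (!x i0))
  · intro x
    rw [hc, neg_one_pow_hw_update]; ring
  · intro x _ heq
    have := congrFun heq i0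
    simp at this
  · intro x; exact Finset.mem_univ _
  · intro x
    funext j
    rcases eq_or_ne j i0 with rfl | hj
    · simp
    · simp [Function.update_of_ne hj]

lemma key_zero {N : ℕ} (p : MvPolynomial (Fin N) ℝ) (hdeg : p.totalDegree < N) :
    ∑ x : Fin N → Bool, (-1 : ℝ) ^ hw x * MvPolynomial.eval (toReal01 x) p = 0 := by
  have heval : ∀ x : Fin N → Bool, MvPolynomial.eval (toReal01 x) p
      = ∑ m ∈ p.support, MvPolynomial.coeff m p * ∏ i, (toReal01 x i) ^ m i :=
    fun x => MvPolynomial.eval_eq' _ _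
  simp_rw [heval, Finset.mul_sum]
  rw [Finset.sum_comm]
  apply Finset.sum_eq_zero
  intro m hm
  have hle := MvPolynomial.le_totalDegree hm
  have hex : ∃ i0, m i0 = 0 := by
    by_contra h
    push_neg at h
    have h1 : ∀ i : Fin N, 1 ≤ m i := fun i => Nat.one_le_iff_ne_zero.mpr (h i)
    have h2 : N ≤ m.sum fun _ e => e := by
      calc N = ∑ _i : Fin N, 1 := by simp
        _ ≤ ∑ i : Fin N, m i := Finset.sum_le_sum fun i _ => h1 i
        _ = m.sum fun _ e => e := (Finsupp.sum_fintype m (fun _ e => e) (fun _ => rfl)).symm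
    omega
  obtain ⟨i0, hi0⟩ := hex
  apply signed_sum_zero (fun x => MvPolynomial.coeff m p * ∏ i, (toReal01 x i) ^ m i) i0
  intro x
  congr 1
  apply Finset.prod_congr rfl
  intro i _
  rcases eq_or_ne i i0 with rfl | hi
  · simp [hi0]
  · simp [toReal01, Function.update_of_ne hi]

lemma parityVal_cases {N : ℕ} (x : Fin N → Bool) :
    parityVal x = 0 ∨ parityVal x = 1 := by
  unfold parityVal
  rcases Nat.mod_two_eq_zero_or_one (hw x) with h | h <;> simp [h]

lemma neg_one_pow_hw_eq {N : ℕ} (x : Fin N → Bool) :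
    (-1 : ℝ) ^ hw x = 1 - 2 * parityVal x := by
  unfold parityVal
  rcases Nat.even_or_odd (hw x) with h | h
  · rw [h.neg_one_pow, Nat.even_iff.mp h]; norm_num
  · rw [h.neg_one_pow, Nat.odd_iff.mp h]; norm_num

theorem stmt_4 {N : ℕ} (hN : 1 ≤ N)
    (S : Finset (Fin N → Bool))
    (hS : (S.card : ℝ) ≥ (4 / 5) * 2 ^ N)
    (p : MvPolynomial (Fin N) ℝ)
    (hml : ∀ i : Fin N, p.degreeOf i ≤ 1)
    (hp01 : ∀ x : Fin N → Bool, MvPolynomial.eval (toReal01 x) p ∈ Set.Icc (0 : ℝ) 1)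
    (hpS : ∀ x ∈ S, |MvPolynomial.eval (toReal01 x) p - parityVal x| ≤ 1 / 3) :
    p.totalDegree = N := by
  classical
  -- upper bound on the total degree from multilinearity
  have hub : p.totalDegree ≤ N := by
    rw [MvPolynomial.totalDegree]
    apply Finset.sup_le
    intro m hm
    have hmi : ∀ i : Fin N, m i ≤ 1 := by
      intro i
      have := MvPolynomial.degreeOf_eq_sup i p
      have hle : m i ≤ p.degreeOf i := by
        rw [this]; exact Finset.le_sup (f := fun m => m i) hm
      exact hle.trans (hml i)
    calc m.sum (fun _ e => e) = ∑ i : Fin N, m i :=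
          Finsupp.sum_fintype _ _ (fun _ => rfl)
      _ ≤ ∑ _i : Fin N, 1 := Finset.sum_le_sum fun i _ => hmi i
      _ = N := by simp
  by_contra hne
  have hlt : p.totalDegree < N := lt_of_le_of_ne hub hne
  have h0 := key_zero p hlt
  -- basic facts
  have hcard : (Finset.univ : Finset (Fin N → Bool)).card = 2 ^ N := by
    simp [Finset.card_univ]
  -- sum of signs is zero
  have hsign : ∑ x : Fin N → Bool, (-1 : ℝ) ^ hw x = 0 := by
    have := signed_sum_zero (N := N) (fun _ => 1) ⟨0, hN⟩ (fun _ => rfl)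
    simpa using this
  -- sum of parities is 2^N / 2
  have hpar : ∑ x : Fin N → Bool, parityVal x = 2 ^ N / 2 := by
    have h1 : ∑ x : Fin N → Bool, (1 - 2 * parityVal x) = 0 := by
      rw [← hsign]
      exact Finset.sum_congr rfl fun x _ => (neg_one_pow_hw_eq x).symm
    rw [Finset.sum_sub_distrib] at h1
    simp only [Finset.sum_const, hcard, nsmul_eq_mul, mul_one, ← Finset.mul_sum] at h1
    push_cast at h1
    linarith
  -- split the key sum
  have hsplit : ∑ x : Fin N → Bool, (-1 : ℝ) ^ hw x * MvPolynomial.eval (toReal01 x) p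
      = -(∑ x : Fin N → Bool, parityVal x)
        + ∑ x : Fin N → Bool, (-1 : ℝ) ^ hw x * (MvPolynomial.eval (toReal01 x) p - parityVal x) := by
    rw [← Finset.sum_neg_distrib, ← Finset.sum_add_distrib]
    apply Finset.sum_congr rfl
    intro x _
    have h1 : (-1 : ℝ) ^ hw x * parityVal x = -parityVal x := by
      rw [neg_one_pow_hw_eq]
      rcases parityVal_cases x with h | h <;> rw [h] <;> ring
    nlinarith [h1]
  set E := ∑ x : Fin N → Bool, (-1 : ℝ) ^ hw x * (MvPolynomial.eval (toReal01 x) p - parityVal x)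
    with hE
  have hEeq : ∑ x : Fin N → Bool, parityVal x = E := by
    rw [hsplit] at h0; linarith
  -- bound E
  have habs : ∀ x : Fin N → Bool,
      |MvPolynomial.eval (toReal01 x) p - parityVal x| ≤ 1 := by
    intro x
    obtain ⟨h0', h1'⟩ := hp01 x
    rw [abs_le]
    rcases parityVal_cases x with h | h <;> rw [h] <;> constructor <;> linarith
  have hEbound : E ≤ (1 / 3 : ℝ) * S.card + (2 ^ N - S.card) := by
    have hle1 : E ≤ ∑ x : Fin N → Bool,
        |MvPolynomial.eval (toReal01 x) p - parityVal x| := by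
      apply Finset.sum_le_sum
      intro x _
      calc (-1 : ℝ) ^ hw x * (MvPolynomial.eval (toReal01 x) p - parityVal x)
          ≤ |(-1 : ℝ) ^ hw x * (MvPolynomial.eval (toReal01 x) p - parityVal x)| := le_abs_self _
        _ = |MvPolynomial.eval (toReal01 x) p - parityVal x| := by
            rw [abs_mul, abs_pow, abs_neg, abs_one, one_pow, one_mul]
    have hsub : S ⊆ Finset.univ := Finset.subset_univ S
    have hsplit2 : ∑ x : Fin N → Bool,
        |MvPolynomial.eval (toReal01 x) p - parityVal x|
        = ∑ x ∈ S, |MvPolynomial.eval (toReal01 x) p - parityVal x|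
          + ∑ x ∈ Finset.univ \ S, |MvPolynomial.eval (toReal01 x) p - parityVal x| := by
      rw [← Finset.sum_sdiff hsub]; ring
    have hb1 : ∑ x ∈ S, |MvPolynomial.eval (toReal01 x) p - parityVal x|
        ≤ (1 / 3 : ℝ) * S.card := by
      calc ∑ x ∈ S, |MvPolynomial.eval (toReal01 x) p - parityVal x|
          ≤ ∑ _x ∈ S, (1 / 3 : ℝ) := Finset.sum_le_sum fun x hx => hpS x hx
        _ = (1 / 3 : ℝ) * S.card := by rw [Finset.sum_const, nsmul_eq_mul]; ring
    have hb2 : ∑ x ∈ Finset.univ \ S, |MvPolynomial.eval (toReal01 x) p - parityVal x|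
        ≤ (2 ^ N - S.card : ℝ) := by
      calc ∑ x ∈ Finset.univ \ S, |MvPolynomial.eval (toReal01 x) p - parityVal x|
          ≤ ∑ _x ∈ Finset.univ \ S, (1 : ℝ) := Finset.sum_le_sum fun x _ => habs x
        _ = ((Finset.univ \ S).card : ℝ) := by rw [Finset.sum_const, nsmul_eq_mul, mul_one]
        _ = (2 ^ N - S.card : ℝ) := by
            rw [Finset.card_sdiff_of_subset hsub, hcard]
            have hSle : S.card ≤ 2 ^ N := hcard ▸ Finset.card_le_card hsub
            push_cast [Nat.cast_sub hSle]
            ring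
    linarith [hle1, hsplit2 ▸ add_le_add hb1 hb2]
  -- final contradiction
  have hpow : (0 : ℝ) < 2 ^ N := by positivity
  rw [hpar] at hEeq
  linarith
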